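/- A thin spider G with partition (R, C, S), where C = {c₁,...,c_k}, S = {s₁,...,s_k} (k ≥ 2) and s_i is adjacent to c_j iff i = j, is well covered if and only if R = ∅. -/

import Mathlib

variable {V : Type*}

/-- `C` is a vertex cover of `G`: every edge has an endpoint in `C`. -/
def IsVertexCover (G : SimpleGraph V) (C : Set V) : Prop :=
  ∀ ⦃u v : V⦄, G.Adj u v → u ∈ C ∨ v ∈ C

/-- A minimal vertex cover: no proper subset is a vertex cover. -/
def IsMinimalVertexCover (G : SimpleGraph V) (C : Set V) : Prop :=
  IsVertexCover G C ∧ ∀ D : Set V, D ⊂ C → ¬ IsVertexCover G D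

/-- `vc(G)`: minimum size of a vertex cover. -/
noncomputable def vcNum (G : SimpleGraph V) : ℕ :=
  sInf {n | ∃ C : Set V, IsVertexCover G C ∧ C.ncard = n}

/-- `vc⁺(G)`: maximum size of a minimal vertex cover. -/
noncomputable def vcPlus (G : SimpleGraph V) : ℕ :=
  sSup {n | ∃ C : Set V, IsMinimalVertexCover G C ∧ C.ncard = n}

/-- `I` is an independent set of `G`. -/
def IsIndepSet (G : SimpleGraph V) (I : Set V) : Prop :=
  ∀ ⦃u v : V⦄, u ∈ I → v ∈ I → ¬ G.Adj u v

/-- A maximal independent set of `G`. -/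
def IsMaxIndepSet (G : SimpleGraph V) (I : Set V) : Prop :=
  IsIndepSet G I ∧ ∀ J : Set V, IsIndepSet G J → I ⊆ J → J = I

/-- `G` is well covered: all maximal independent sets have the same size. -/
def WellCovered (G : SimpleGraph V) : Prop :=
  ∀ I J : Set V, IsMaxIndepSet G I → IsMaxIndepSet G J → I.ncard = J.ncard

/-- An independent set of the subgraph of `G` induced on `W`. -/
def IsIndepOn (G : SimpleGraph V) (W I : Set V) : Prop :=
  I ⊆ W ∧ IsIndepSet G I

/-- A maximal independent set of the subgraph of `G` induced on `W`. -/
def IsMaxIndepOn (G : SimpleGraph V) (W I : Set V) : Prop :=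
  IsIndepOn G W I ∧ ∀ J : Set V, IsIndepOn G W J → I ⊆ J → J = I

/-- The subgraph of `G` induced on `W` is well covered. -/
def WellCoveredOn (G : SimpleGraph V) (W : Set V) : Prop :=
  ∀ I J : Set V, IsMaxIndepOn G W I → IsMaxIndepOn G W J → I.ncard = J.ncard

/-- Independence number of the subgraph induced on `W`. -/
noncomputable def indepNumOn (G : SimpleGraph V) (W : Set V) : ℕ :=
  sSup {n | ∃ I : Set V, IsIndepOn G W I ∧ I.ncard = n}

/-- Independence number `α(G)`. -/
noncomputable def indepNum (G : SimpleGraph V) : ℕ :=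
  sSup {n | ∃ I : Set V, IsIndepSet G I ∧ I.ncard = n}

/-- Open neighborhood of a set `B`. -/
def nbhdSet (G : SimpleGraph V) (B : Set V) : Set V :=
  {v | ∃ b ∈ B, G.Adj b v}

/-- Crown decomposition of the subgraph of `G` induced on `W` into crown `C`,
head `H` and remainder `R`. -/
def IsCrownDecompOn (G : SimpleGraph V) (W C H R : Set V) : Prop :=
  C.Nonempty ∧ IsIndepSet G C ∧
  (∀ ⦃u v : V⦄, u ∈ C → v ∈ R → ¬ G.Adj u v) ∧
  C ∪ H ∪ R = W ∧ Disjoint C H ∧ Disjoint C R ∧ Disjoint H R ∧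
  ∃ M : V → V, (∀ h ∈ H, M h ∈ C ∧ G.Adj h (M h)) ∧ Set.InjOn M H

/-- Crown decomposition of `G`. -/
def IsCrownDecomp (G : SimpleGraph V) (C H R : Set V) : Prop :=
  IsCrownDecompOn G Set.univ C H R

/-- `G` has no isolated vertices. -/
def NoIsolated (G : SimpleGraph V) : Prop := ∀ v : V, ∃ u, G.Adj v u

/-- Pseudo-split graph with partition `(R, C, S)`. -/
def IsPseudoSplit (G : SimpleGraph V) (R C S : Set V) : Prop :=
  R ∪ C ∪ S = Set.univ ∧ Disjoint R C ∧ Disjoint R S ∧ Disjoint C S ∧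
  (∀ ⦃u v : V⦄, u ∈ C → v ∈ C → u ≠ v → G.Adj u v) ∧
  IsIndepSet G S ∧
  (∀ r ∈ R, ∀ c ∈ C, G.Adj r c) ∧
  (∀ r ∈ R, ∀ s ∈ S, ¬ G.Adj r s) ∧
  (∀ c ∈ C, ∃ s ∈ S, G.Adj c s) ∧
  (∀ s ∈ S, ∃ c ∈ C, ¬ G.Adj s c)

/-- Join of two graphs: disjoint union plus all edges between the two sides. -/
def joinGraph {α β : Type*} (G₁ : SimpleGraph α) (G₂ : SimpleGraph β) :
    SimpleGraph (α ⊕ β) where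
  Adj x y := match x, y with
    | Sum.inl a, Sum.inl b => G₁.Adj a b
    | Sum.inr a, Sum.inr b => G₂.Adj a b
    | Sum.inl _, Sum.inr _ => True
    | Sum.inr _, Sum.inl _ => True
  symm := by constructor; rintro (a|a) (b|b) h <;> first | exact h.symm | trivial
  loopless := by constructor; rintro (a|a) h <;> exact h.ne rfl

theorem stmt16 [Fintype V] (G : SimpleGraph V) (R : Set V) (k : ℕ) (hk : 2 ≤ k)
    (cf sf : Fin k → V)
    (hcf : Function.Injective cf) (hsf : Function.Injective sf)
    (hps : IsPseudoSplit G R (Set.range cf) (Set.range sf))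
    (hadj : ∀ i j, G.Adj (sf i) (cf j) ↔ i = j) :
    WellCovered G ↔ R = ∅ := by
  obtain ⟨hcover, hRC, hRS, hCS, hclique, hSindep, hRCadj, hRSnadj, -, -⟩ := hps
  have hk0 : (0 : ℕ) < k := by omega
  set i₀ : Fin k := ⟨0, hk0⟩ with hi₀
  have hSk : (Set.range sf).ncard = k := by
    rw [← Set.image_univ, Set.ncard_image_of_injective _ hsf, Set.ncard_univ]
    simp
  -- cardinality of the canonical maximal independent sets containing one clique vertex
  have hcard : ∀ j : Fin k, (insert (cf j) (Set.range sf \ {sf j})).ncard = k := by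
    intro j
    have hnm : cf j ∉ Set.range sf \ {sf j} := fun h =>
      Set.disjoint_left.mp hCS ⟨j, rfl⟩ h.1
    rw [Set.ncard_insert_of_notMem hnm (Set.toFinite _),
        Set.ncard_diff_singleton_of_mem (show sf j ∈ Set.range sf from ⟨j, rfl⟩), hSk]
    omega
  -- I₁ is a maximal independent set of size k
  have hI₁indep : ∀ j : Fin k, IsIndepSet G (insert (cf j) (Set.range sf \ {sf j})) := by
    intro j u v hu hv hA
    rcases hu with rfl | ⟨⟨l, rfl⟩, hl⟩
    · rcases hv with rfl | ⟨⟨m, rfl⟩, hm⟩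
      · exact hA.ne rfl
      · exact hm (by simp [(hadj m j).mp hA.symm])
    · rcases hv with rfl | ⟨⟨m, rfl⟩, hm⟩
      · exact hl (by simp [(hadj l j).mp hA])
      · exact hSindep ⟨l, rfl⟩ ⟨m, rfl⟩ hA
  have hI₁max : IsMaxIndepSet G (insert (cf i₀) (Set.range sf \ {sf i₀})) := by
    refine ⟨hI₁indep i₀, fun J hJ hsub => ?_⟩
    refine Set.Subset.antisymm (fun v hv => ?_) hsub
    have hc0J : cf i₀ ∈ J := hsub (Set.mem_insert _ _)
    have hv' : v ∈ R ∪ Set.range cf ∪ Set.range sf := by rw [hcover]; trivial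
    rcases hv' with (hvR | ⟨j, rfl⟩) | ⟨j, rfl⟩
    · exact absurd (hRCadj v hvR _ ⟨i₀, rfl⟩) (hJ hv hc0J)
    · by_cases hj : j = i₀
      · subst hj; exact Set.mem_insert _ _
      · exact absurd (hclique ⟨j, rfl⟩ ⟨i₀, rfl⟩ fun h => hj (hcf h)) (hJ hv hc0J)
    · by_cases hj : j = i₀
      · subst hj; exact absurd ((hadj i₀ i₀).mpr rfl) (hJ hv hc0J)
      · refine Set.mem_insert_of_mem _ ?_
        exact ⟨⟨j, rfl⟩, fun h => hj (hsf h)⟩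
  constructor
  · intro hwc
    by_contra hR
    obtain ⟨r, hr⟩ := Set.nonempty_iff_ne_empty.mpr hR
    -- a maximal independent subset of R containing r
    set 𝒮 : Set (Set V) := {J | J ⊆ R ∧ IsIndepSet G J ∧ r ∈ J} with h𝒮
    have h𝒮ne : 𝒮.Nonempty := by
      refine ⟨{r}, Set.singleton_subset_iff.mpr hr, ?_, rfl⟩
      intro u v hu hv hA
      rw [Set.mem_singleton_iff] at hu hv
      subst hu; subst hv; exact hA.ne rfl
    obtain ⟨J, hJ𝒮, hJmax⟩ :=
      Set.Finite.exists_maximalFor Set.ncard 𝒮 (Set.toFinite _) h𝒮ne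
    obtain ⟨hJR, hJind, hrJ⟩ := hJ𝒮
    have hJext : ∀ v ∈ R, v ∉ J → ∃ j ∈ J, G.Adj j v := by
      intro v hvR hvJ
      by_contra h
      push_neg at h
      have hmem : insert v J ∈ 𝒮 := by
        refine ⟨Set.insert_subset hvR hJR, ?_, Set.mem_insert_of_mem _ hrJ⟩
        intro u w hu hw hA
        rcases hu with rfl | hu
        · rcases hw with rfl | hw
          · exact hA.ne rfl
          · exact h w hw hA.symm
        · rcases hw with rfl | hw
          · exact h u hu hA
          · exact hJind hu hw hA
      have h1 : J.ncard ≤ (insert v J).ncard := Set.ncard_le_ncard (Set.subset_insert _ _) (Set.toFinite _)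
      have h2 := hJmax hmem h1
      rw [Set.ncard_insert_of_notMem hvJ (Set.toFinite _)] at h2
      omega
    set I₂ : Set V := Set.range sf ∪ J with hI₂
    have hI₂ind : IsIndepSet G I₂ := by
      intro u v hu hv hA
      rcases hu with hu | hu
      · rcases hv with hv | hv
        · exact hSindep hu hv hA
        · exact hRSnadj v (hJR hv) u hu hA.symm
      · rcases hv with hv | hv
        · exact hRSnadj u (hJR hu) v hv hA
        · exact hJind hu hv hA
    have hI₂max : IsMaxIndepSet G I₂ := by
      refine ⟨hI₂ind, fun K hK hsub => ?_⟩
      refine Set.Subset.antisymm (fun v hv => ?_) hsub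
      have hv' : v ∈ R ∪ Set.range cf ∪ Set.range sf := by rw [hcover]; trivial
      rcases hv' with (hvR | ⟨j, rfl⟩) | hvS
      · by_cases hvJ : v ∈ J
        · exact Or.inr hvJ
        · obtain ⟨j, hjJ, hjA⟩ := hJext v hvR hvJ
          exact absurd hjA (hK (hsub (Or.inr hjJ)) hv)
      · exact absurd ((hadj j j).mpr rfl) (hK (hsub (Or.inl ⟨j, rfl⟩)) hv)
      · exact Or.inl hvS
    have hdisj : Disjoint (Set.range sf) J :=
      Set.disjoint_of_subset_right hJR (Set.disjoint_of_subset_left le_rfl hRS.symm)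
    have hI₂card : I₂.ncard = k + J.ncard := by
      rw [hI₂, Set.ncard_union_eq hdisj (Set.toFinite _) (Set.toFinite _), hSk]
    have hJpos : 0 < J.ncard := (Set.ncard_pos (Set.toFinite _)).mpr ⟨r, hrJ⟩
    have := hwc _ _ hI₁max hI₂max
    rw [hcard i₀, hI₂card] at this
    omega
  · intro hR
    have key : ∀ I : Set V, IsMaxIndepSet G I → I.ncard = k := by
      intro I hI
      have hIsub : ∀ v ∈ I, v ∈ Set.range cf ∪ Set.range sf := by
        intro v hv
        have hv' : v ∈ R ∪ Set.range cf ∪ Set.range sf := by rw [hcover]; trivial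
        rcases hv' with (hvR | h) | h
        · rw [hR] at hvR; exact absurd hvR (Set.notMem_empty v)
        · exact Or.inl h
        · exact Or.inr h
      by_cases hc : ∃ j : Fin k, cf j ∈ I
      · obtain ⟨j, hj⟩ := hc
        have hIeq : I = insert (cf j) (Set.range sf \ {sf j}) := by
          have hsub : I ⊆ insert (cf j) (Set.range sf \ {sf j}) := by
            intro v hv
            rcases hIsub v hv with ⟨l, rfl⟩ | ⟨l, rfl⟩
            · by_cases hl : l = j
              · subst hl; exact Set.mem_insert _ _
              · exact absurd (hclique ⟨l, rfl⟩ ⟨j, rfl⟩ fun h => hl (hcf h))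
                  (hI.1 hv hj)
            · by_cases hl : l = j
              · subst hl; exact absurd ((hadj l l).mpr rfl) (hI.1 hv hj)
              · refine Set.mem_insert_of_mem _ ?_
                exact ⟨⟨l, rfl⟩, fun h => hl (hsf h)⟩
          refine Set.Subset.antisymm hsub fun v hv => ?_
          rcases hv with rfl | ⟨⟨l, rfl⟩, hl⟩
          · exact hj
          · have hlj : l ≠ j := fun h => by simp [h] at hl
            have hind : IsIndepSet G (insert (sf l) I) := by
              intro u w hu hw hA
              rcases hu with rfl | hu
              · rcases hw with rfl | hw
                · exact hA.ne rfl
                · rcases hsub hw with rfl | ⟨⟨m, rfl⟩, hm⟩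
                  · exact hlj ((hadj l j).mp hA)
                  · exact hSindep ⟨l, rfl⟩ ⟨m, rfl⟩ hA
              · rcases hw with rfl | hw
                · rcases hsub hu with rfl | ⟨⟨m, rfl⟩, hm⟩
                  · exact hlj ((hadj l j).mp hA.symm)
                  · exact hSindep ⟨m, rfl⟩ ⟨l, rfl⟩ hA
                · exact hI.1 hu hw hA
            have := hI.2 _ hind (Set.subset_insert _ _)
            rw [← this]; exact Set.mem_insert _ _
        rw [hIeq]; exact hcard j
      · push_neg at hc
        have hsub : I ⊆ Set.range sf := by
          intro v hv
          rcases hIsub v hv with ⟨l, rfl⟩ | h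
          · exact absurd hv (by simpa using hc l)
          · exact h
        have := hI.2 _ hSindep hsub
        rw [← this, hSk]
    intro I J hI hJ
    rw [key I hI, key J hJ]
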